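/- For bounded star bodies A₁, A₂ ⊆ ℝ^d, the radial metric δ(A₁,A₂) := sup_{θ∈S^{d-1}} |ρ_{A₁}(θ) − ρ_{A₂}(θ)| satisfies δ(A₁,A₂) = sup_{x∈ℝ^d} |d_r(x,A₁) − d_r(x,A₂)| = max{e_r(A₁,A₂), e_r(A₂,A₁)}. -/

import Mathlib

open scoped ENNReal

noncomputable section

/-- Radial function of a set `A ⊆ ℝ^d` in direction `θ`. -/
def radialFn {d : ℕ} (A : Set (EuclideanSpace ℝ (Fin d)))
    (θ : EuclideanSpace ℝ (Fin d)) : ℝ≥0∞ :=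
  sSup (ENNReal.ofReal '' {r : ℝ | 0 ≤ r ∧ r • θ ∈ A})

/-- A star set: nonempty and closed under scaling by `t ∈ [0,1]`. -/
def IsStarSet {d : ℕ} (A : Set (EuclideanSpace ℝ (Fin d))) : Prop :=
  A.Nonempty ∧ ∀ a ∈ A, ∀ t : ℝ, 0 ≤ t → t ≤ 1 → t • a ∈ A

/-- A star body: a radially closed star set. -/
def IsStarBody {d : ℕ} (A : Set (EuclideanSpace ℝ (Fin d))) : Prop :=
  IsStarSet A ∧ ∀ θ : EuclideanSpace ℝ (Fin d), ‖θ‖ = 1 → radialFn A θ ≠ ⊤ →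
    (radialFn A θ).toReal • θ ∈ A

open scoped Classical in
/-- The radial distance from a point `x` to a star body `A`:
`0` if `x ∈ A`, and `‖x‖ - ρ_A(x/‖x‖)` otherwise. -/
def radialDist {d : ℕ} (x : EuclideanSpace ℝ (Fin d))
    (A : Set (EuclideanSpace ℝ (Fin d))) : ℝ :=
  if x ∈ A then 0 else ‖x‖ - (radialFn A (‖x‖⁻¹ • x)).toReal

/-- The radial metric between star bodies. -/
def radialMetric {d : ℕ} (A₁ A₂ : Set (EuclideanSpace ℝ (Fin d))) : ℝ :=
  ⨆ θ : Metric.sphere (0 : EuclideanSpace ℝ (Fin d)) 1,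
    |(radialFn A₁ (θ : EuclideanSpace ℝ (Fin d))).toReal -
      (radialFn A₂ (θ : EuclideanSpace ℝ (Fin d))).toReal|

/-- The radial excess of `A₁` over `A₂`. -/
def radialExcess {d : ℕ} (A₁ A₂ : Set (EuclideanSpace ℝ (Fin d))) : ℝ :=
  ⨆ a : A₁, radialDist (a : EuclideanSpace ℝ (Fin d)) A₂

lemma zero_mem_of_starSet {d : ℕ} {A : Set (EuclideanSpace ℝ (Fin d))}
    (hA : IsStarSet A) : (0 : EuclideanSpace ℝ (Fin d)) ∈ A := by
  obtain ⟨a, ha⟩ := hA.1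
  simpa using hA.2 a ha 0 le_rfl zero_le_one

lemma radialFn_le {d : ℕ} {A : Set (EuclideanSpace ℝ (Fin d))} {M : ℝ}
    (hM : ∀ x ∈ A, ‖x‖ ≤ M) {θ : EuclideanSpace ℝ (Fin d)} (hθ : ‖θ‖ = 1) :
    radialFn A θ ≤ ENNReal.ofReal M := by
  apply sSup_le
  rintro _ ⟨r, ⟨hr0, hrA⟩, rfl⟩
  have h := hM _ hrA
  rw [norm_smul, hθ, mul_one, Real.norm_eq_abs, abs_of_nonneg hr0] at h
  exact ENNReal.ofReal_le_ofReal h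

lemma radialFn_ne_top {d : ℕ} {A : Set (EuclideanSpace ℝ (Fin d))}
    (hb : Bornology.IsBounded A) {θ : EuclideanSpace ℝ (Fin d)} (hθ : ‖θ‖ = 1) :
    radialFn A θ ≠ ⊤ := by
  obtain ⟨M, hM⟩ := hb.exists_norm_le
  exact ne_top_of_le_ne_top ENNReal.ofReal_ne_top (radialFn_le hM hθ)

lemma radialFn_toReal_le {d : ℕ} {A : Set (EuclideanSpace ℝ (Fin d))} {M : ℝ}
    (hM : ∀ x ∈ A, ‖x‖ ≤ M) {θ : EuclideanSpace ℝ (Fin d)} (hθ : ‖θ‖ = 1) :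
    (radialFn A θ).toReal ≤ max M 0 := by
  have h : radialFn A θ ≤ ENNReal.ofReal (max M 0) :=
    radialFn_le (fun x hx => (hM x hx).trans (le_max_left _ _)) hθ
  exact ENNReal.toReal_le_of_le_ofReal (le_max_right _ _) h

lemma mem_iff_le_radialFn {d : ℕ} {A : Set (EuclideanSpace ℝ (Fin d))}
    (hA : IsStarBody A) (hb : Bornology.IsBounded A)
    {θ : EuclideanSpace ℝ (Fin d)} (hθ : ‖θ‖ = 1) {r : ℝ} (hr : 0 ≤ r) :
    r • θ ∈ A ↔ r ≤ (radialFn A θ).toReal := by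
  have hne := radialFn_ne_top hb hθ
  constructor
  · intro hmem
    have h1 : ENNReal.ofReal r ≤ radialFn A θ :=
      le_sSup ⟨r, ⟨hr, hmem⟩, rfl⟩
    calc r = (ENNReal.ofReal r).toReal := (ENNReal.toReal_ofReal hr).symm
    _ ≤ _ := ENNReal.toReal_mono hne h1
  · intro hle
    have hmem := hA.2 θ hθ hne
    set f := (radialFn A θ).toReal with hf
    rcases eq_or_lt_of_le (le_trans hr hle) with h0 | h0
    · have : r = 0 := le_antisymm (hle.trans h0.symm.le) hr
      rw [this, ← h0.symm] at *
      simpa [← h0] using hmem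
    · have ht0 : 0 ≤ r / f := div_nonneg hr h0.le
      have ht1 : r / f ≤ 1 := (div_le_one h0).mpr hle
      have := hA.1.2 _ hmem (r / f) ht0 ht1
      rwa [smul_smul, div_mul_cancel₀ _ h0.ne'] at this

lemma radialDist_of_mem {d : ℕ} {A : Set (EuclideanSpace ℝ (Fin d))}
    {x : EuclideanSpace ℝ (Fin d)} (hx : x ∈ A) : radialDist x A = 0 :=
  if_pos hx

lemma radialDist_le_norm {d : ℕ} (x : EuclideanSpace ℝ (Fin d))
    (A : Set (EuclideanSpace ℝ (Fin d))) : radialDist x A ≤ ‖x‖ := by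
  unfold radialDist
  split
  · positivity
  · have := ENNReal.toReal_nonneg (a := radialFn A (‖x‖⁻¹ • x))
    linarith

lemma radialDist_eq_max {d : ℕ} {A : Set (EuclideanSpace ℝ (Fin d))}
    (hA : IsStarBody A) (hb : Bornology.IsBounded A)
    {x : EuclideanSpace ℝ (Fin d)} (hx : x ≠ 0) :
    radialDist x A = max (‖x‖ - (radialFn A (‖x‖⁻¹ • x)).toReal) 0 := by
  have hnx : ‖x‖ ≠ 0 := norm_ne_zero_iff.mpr hx
  have hθ : ‖‖x‖⁻¹ • x‖ = 1 := by
    rw [norm_smul, Real.norm_eq_abs, abs_of_nonneg (by positivity), inv_mul_cancel₀ hnx]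
  have hxθ : ‖x‖ • (‖x‖⁻¹ • x) = x := by
    rw [smul_smul, mul_inv_cancel₀ hnx, one_smul]
  have hmem : x ∈ A ↔ ‖x‖ ≤ (radialFn A (‖x‖⁻¹ • x)).toReal := by
    conv_lhs => rw [← hxθ]
    exact mem_iff_le_radialFn hA hb hθ (norm_nonneg x)
  unfold radialDist
  split
  · rw [max_eq_right]
    linarith [hmem.mp ‹x ∈ A›]
  · rw [max_eq_left]
    have := hmem.not.mp ‹x ∉ A›
    linarith [lt_of_not_ge this]

lemma exists_witness {d : ℕ} {A₁ A₂ : Set (EuclideanSpace ℝ (Fin d))}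
    (hA₁ : IsStarBody A₁) (hA₂ : IsStarBody A₂)
    (hb₁ : Bornology.IsBounded A₁) (hb₂ : Bornology.IsBounded A₂)
    {θ : EuclideanSpace ℝ (Fin d)} (hθ : ‖θ‖ = 1)
    (h : (radialFn A₂ θ).toReal ≤ (radialFn A₁ θ).toReal) :
    ∃ x : EuclideanSpace ℝ (Fin d), x ∈ A₁ ∧ radialDist x A₁ = 0 ∧
      radialDist x A₂ = (radialFn A₁ θ).toReal - (radialFn A₂ θ).toReal := by
  set f₁ := (radialFn A₁ θ).toReal with hf₁
  set f₂ := (radialFn A₂ θ).toReal with hf₂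
  have hf₁0 : 0 ≤ f₁ := ENNReal.toReal_nonneg
  have hf₂0 : 0 ≤ f₂ := ENNReal.toReal_nonneg
  refine ⟨f₁ • θ, ?_, ?_, ?_⟩
  · exact (mem_iff_le_radialFn hA₁ hb₁ hθ hf₁0).mpr le_rfl
  · exact radialDist_of_mem ((mem_iff_le_radialFn hA₁ hb₁ hθ hf₁0).mpr le_rfl)
  · rcases eq_or_lt_of_le h with heq | hlt
    · have : f₁ • θ ∈ A₂ := (mem_iff_le_radialFn hA₂ hb₂ hθ hf₁0).mpr heq.ge
      rw [radialDist_of_mem this, ← heq]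
      ring
    · have hx0 : f₁ • θ ≠ 0 := by
        intro hc
        have : f₁ = 0 ∨ θ = 0 := smul_eq_zero.mp hc
        rcases this with h' | h'
        · exact absurd (h' ▸ hlt) (not_lt.mpr hf₂0)
        · rw [h', norm_zero] at hθ; norm_num at hθ
      have hnorm : ‖f₁ • θ‖ = f₁ := by
        rw [norm_smul, hθ, mul_one, Real.norm_eq_abs, abs_of_nonneg hf₁0]
      have hdir : ‖f₁ • θ‖⁻¹ • (f₁ • θ) = θ := by
        rw [hnorm, smul_smul, inv_mul_cancel₀ (by linarith : f₁ ≠ 0), one_smul]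
      rw [radialDist_eq_max hA₂ hb₂ hx0, hdir, hnorm, ← hf₂, max_eq_left (by linarith)]

theorem radialMetric_eq_sup_radialDist {d : ℕ} (A₁ A₂ : Set (EuclideanSpace ℝ (Fin d)))
    (hA₁ : IsStarBody A₁) (hA₂ : IsStarBody A₂)
    (hb₁ : Bornology.IsBounded A₁) (hb₂ : Bornology.IsBounded A₂) :
    radialMetric A₁ A₂ =
        (⨆ x : EuclideanSpace ℝ (Fin d), |radialDist x A₁ - radialDist x A₂|) ∧
      radialMetric A₁ A₂ = max (radialExcess A₁ A₂) (radialExcess A₂ A₁) := by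
  have hne₁ : Nonempty A₁ := ⟨⟨0, zero_mem_of_starSet hA₁.1⟩⟩
  have hne₂ : Nonempty A₂ := ⟨⟨0, zero_mem_of_starSet hA₂.1⟩⟩
  obtain ⟨M₁, hM₁⟩ := hb₁.exists_norm_le
  obtain ⟨M₂, hM₂⟩ := hb₂.exists_norm_le
  set S := Metric.sphere (0 : EuclideanSpace ℝ (Fin d)) 1 with hS
  have hSn : ∀ θ : S, ‖(θ : EuclideanSpace ℝ (Fin d))‖ = 1 := fun θ =>
    mem_sphere_zero_iff_norm.mp θ.2
  rcases isEmpty_or_nonempty S with hE | hNE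
  · -- degenerate case: the sphere is empty, so every point is 0
    have hall : ∀ x : EuclideanSpace ℝ (Fin d), x = 0 := by
      intro x
      by_contra hx
      have hnx : ‖x‖ ≠ 0 := norm_ne_zero_iff.mpr hx
      have : (‖x‖⁻¹ • x) ∈ S := by
        rw [hS, mem_sphere_zero_iff_norm, norm_smul, Real.norm_eq_abs,
          abs_of_nonneg (by positivity), inv_mul_cancel₀ hnx]
      exact hE.elim ⟨_, this⟩
    have hd : ∀ x (A : Set (EuclideanSpace ℝ (Fin d))), IsStarSet A → radialDist x A = 0 := by
      intro x A hA
      rw [hall x]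
      exact radialDist_of_mem (zero_mem_of_starSet hA)
    have hm : radialMetric A₁ A₂ = 0 := Real.iSup_of_isEmpty _
    have hsup : (⨆ x : EuclideanSpace ℝ (Fin d), |radialDist x A₁ - radialDist x A₂|) = 0 := by
      have h0 : (⨆ x : EuclideanSpace ℝ (Fin d), |radialDist x A₁ - radialDist x A₂|)
          = ⨆ _x : EuclideanSpace ℝ (Fin d), (0:ℝ) :=
        iSup_congr fun x => by rw [hd x A₁ hA₁.1, hd x A₂ hA₂.1]; simp
      rw [h0]
      exact ciSup_const
    have hexc : ∀ (A B : Set (EuclideanSpace ℝ (Fin d))), IsStarSet A → IsStarSet B →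
        Nonempty A → radialExcess A B = 0 := by
      intro A B hA hB hne
      have h0 : radialExcess A B = ⨆ _a : A, (0:ℝ) :=
        iSup_congr fun a => hd _ B hB
      rw [h0]
      exact ciSup_const
    rw [hm, hsup, hexc A₁ A₂ hA₁.1 hA₂.1 hne₁, hexc A₂ A₁ hA₂.1 hA₁.1 hne₂]
    simp
  · set f₁ : S → ℝ := fun θ => (radialFn A₁ (θ : EuclideanSpace ℝ (Fin d))).toReal with hf₁
    set f₂ : S → ℝ := fun θ => (radialFn A₂ (θ : EuclideanSpace ℝ (Fin d))).toReal with hf₂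
    have hf₁b : ∀ θ, f₁ θ ≤ max M₁ 0 := fun θ => radialFn_toReal_le hM₁ (hSn θ)
    have hf₂b : ∀ θ, f₂ θ ≤ max M₂ 0 := fun θ => radialFn_toReal_le hM₂ (hSn θ)
    have hf₁0 : ∀ θ, 0 ≤ f₁ θ := fun θ => ENNReal.toReal_nonneg
    have hf₂0 : ∀ θ, 0 ≤ f₂ θ := fun θ => ENNReal.toReal_nonneg
    have hbddS : BddAbove (Set.range fun θ : S => |f₁ θ - f₂ θ|) := by
      refine ⟨max M₁ 0 + max M₂ 0, ?_⟩
      rintro _ ⟨θ, rfl⟩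
      have := hf₁b θ; have := hf₂b θ; have := hf₁0 θ; have := hf₂0 θ
      rw [abs_le]; constructor <;> linarith
    have hrm : radialMetric A₁ A₂ = ⨆ θ : S, |f₁ θ - f₂ θ| := rfl
    have hrm0 : 0 ≤ radialMetric A₁ A₂ := by
      obtain ⟨θ₀⟩ := hNE
      exact (abs_nonneg _).trans (le_ciSup hbddS θ₀)
    -- key pointwise bound
    have hkey : ∀ x : EuclideanSpace ℝ (Fin d),
        |radialDist x A₁ - radialDist x A₂| ≤ radialMetric A₁ A₂ := by
      intro x
      by_cases hx : x = 0
      · rw [hx, radialDist_of_mem (zero_mem_of_starSet hA₁.1),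
          radialDist_of_mem (zero_mem_of_starSet hA₂.1)]
        simpa using hrm0
      · have hnx : ‖x‖ ≠ 0 := norm_ne_zero_iff.mpr hx
        have hθ : (‖x‖⁻¹ • x) ∈ S := by
          rw [hS, mem_sphere_zero_iff_norm, norm_smul, Real.norm_eq_abs,
            abs_of_nonneg (by positivity), inv_mul_cancel₀ hnx]
        rw [radialDist_eq_max hA₁ hb₁ hx, radialDist_eq_max hA₂ hb₂ hx]
        calc |max (‖x‖ - (radialFn A₁ (‖x‖⁻¹ • x)).toReal) 0 -
              max (‖x‖ - (radialFn A₂ (‖x‖⁻¹ • x)).toReal) 0|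
            ≤ |(‖x‖ - (radialFn A₁ (‖x‖⁻¹ • x)).toReal) -
              (‖x‖ - (radialFn A₂ (‖x‖⁻¹ • x)).toReal)| := abs_max_sub_max_le_abs _ _ _
          _ = |f₁ ⟨_, hθ⟩ - f₂ ⟨_, hθ⟩| := by rw [abs_sub_comm]; simp only [hf₁, hf₂]; ring_nf
          _ ≤ radialMetric A₁ A₂ := hrm ▸ le_ciSup hbddS ⟨_, hθ⟩
    have hbddX : BddAbove (Set.range fun x : EuclideanSpace ℝ (Fin d) =>
        |radialDist x A₁ - radialDist x A₂|) := by
      refine ⟨radialMetric A₁ A₂, ?_⟩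
      rintro _ ⟨x, rfl⟩
      exact hkey x
    have hbddE : ∀ (A B : Set (EuclideanSpace ℝ (Fin d))) (M : ℝ),
        (∀ x ∈ A, ‖x‖ ≤ M) →
        BddAbove (Set.range fun a : A => radialDist (a : EuclideanSpace ℝ (Fin d)) B) := by
      intro A B M hM
      refine ⟨max M 0, ?_⟩
      rintro _ ⟨a, rfl⟩
      exact (radialDist_le_norm _ _).trans ((hM a a.2).trans (le_max_left _ _))
    have hbddE₁ := hbddE A₁ A₂ M₁ hM₁
    have hbddE₂ := hbddE A₂ A₁ M₂ hM₂
    -- excess ≤ metric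
    have hexc_le : ∀ (A B : Set (EuclideanSpace ℝ (Fin d))),
        IsStarBody A → IsStarBody B → Bornology.IsBounded A → Bornology.IsBounded B →
        (∀ θ : S, |(radialFn A (θ:EuclideanSpace ℝ (Fin d))).toReal -
          (radialFn B (θ:EuclideanSpace ℝ (Fin d))).toReal| ≤ radialMetric A₁ A₂) →
        radialExcess A B ≤ radialMetric A₁ A₂ := by
      intro A B hA hB hbA hbB habs
      have : Nonempty A := ⟨⟨0, zero_mem_of_starSet hA.1⟩⟩
      refine ciSup_le fun a => ?_
      by_cases ha : (a : EuclideanSpace ℝ (Fin d)) = 0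
      · rw [ha, radialDist_of_mem (zero_mem_of_starSet hB.1)]
        exact hrm0
      · have hnx : ‖(a : EuclideanSpace ℝ (Fin d))‖ ≠ 0 := norm_ne_zero_iff.mpr ha
        set x := (a : EuclideanSpace ℝ (Fin d))
        have hθu : ‖‖x‖⁻¹ • x‖ = 1 := by
          rw [norm_smul, Real.norm_eq_abs, abs_of_nonneg (by positivity),
            inv_mul_cancel₀ hnx]
        have hθ : (‖x‖⁻¹ • x) ∈ S := by rw [hS, mem_sphere_zero_iff_norm]; exact hθu
        have hxθ : ‖x‖ • (‖x‖⁻¹ • x) = x := by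
          rw [smul_smul, mul_inv_cancel₀ hnx, one_smul]
        have hle : ‖x‖ ≤ (radialFn A (‖x‖⁻¹ • x)).toReal := by
          refine (mem_iff_le_radialFn hA hbA hθu (norm_nonneg x)).mp ?_
          rw [hxθ]; exact a.2
        rw [radialDist_eq_max hB hbB ha]
        have h2 := habs ⟨_, hθ⟩
        have h3 : 0 ≤ (radialFn B (‖x‖⁻¹ • x)).toReal := ENNReal.toReal_nonneg
        rw [abs_le] at h2
        simp only at h2
        refine max_le ?_ hrm0
        linarith [h2.2]
    have heq2 : radialMetric A₁ A₂ = max (radialExcess A₁ A₂) (radialExcess A₂ A₁) := by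
      apply le_antisymm
      · rw [hrm]
        refine ciSup_le fun θ => ?_
        rcases le_total (f₂ θ) (f₁ θ) with h | h
        · obtain ⟨x, hxA, _, hd₂⟩ := exists_witness hA₁ hA₂ hb₁ hb₂ (hSn θ) h
          have : |f₁ θ - f₂ θ| = radialDist x A₂ := by
            rw [hd₂, abs_of_nonneg (by simp only [hf₁, hf₂]; linarith)]
          rw [this]
          exact le_max_of_le_left (le_ciSup hbddE₁ ⟨x, hxA⟩)
        · obtain ⟨x, hxA, _, hd₁⟩ := exists_witness hA₂ hA₁ hb₂ hb₁ (hSn θ) h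
          have : |f₁ θ - f₂ θ| = radialDist x A₁ := by
            rw [hd₁, abs_sub_comm, abs_of_nonneg (by simp only [hf₁, hf₂]; linarith)]
          rw [this]
          exact le_max_of_le_right (le_ciSup hbddE₂ ⟨x, hxA⟩)
      · refine max_le ?_ ?_
        · exact hexc_le A₁ A₂ hA₁ hA₂ hb₁ hb₂ (fun θ => hrm ▸ le_ciSup hbddS θ)
        · exact hexc_le A₂ A₁ hA₂ hA₁ hb₂ hb₁
            (fun θ => by rw [abs_sub_comm]; exact hrm ▸ le_ciSup hbddS θ)
    refine ⟨le_antisymm ?_ (ciSup_le hkey), heq2⟩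
    rw [hrm]
    refine ciSup_le fun θ => ?_
    rcases le_total (f₂ θ) (f₁ θ) with h | h
    · obtain ⟨x, _, hd₁, hd₂⟩ := exists_witness hA₁ hA₂ hb₁ hb₂ (hSn θ) h
      have : |f₁ θ - f₂ θ| = |radialDist x A₁ - radialDist x A₂| := by
        rw [hd₁, hd₂, zero_sub, abs_neg]
      rw [this]
      exact le_ciSup hbddX x
    · obtain ⟨x, _, hd₂, hd₁⟩ := exists_witness hA₂ hA₁ hb₂ hb₁ (hSn θ) h
      have : |f₁ θ - f₂ θ| = |radialDist x A₁ - radialDist x A₂| := by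
        rw [hd₁, hd₂, sub_zero, abs_sub_comm]
      rw [this]
      exact le_ciSup hbddX x
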